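/- arXiv:2109.10482 — 4 statements merged into one kernel-verified Lean document; each statement's English description precedes it below -/
import Mathlib

section
/- Let ψ_c and ψ_j be scale functions. Then ∫₀¹ ψ_c(s)/(s ψ_j(s)) ds < ∞ if and only if ∫₀¹ 1/(ψ_j(ψ_c⁻¹(t))) dt < ∞. -/
open Set MeasureTheory ENNReal


private lemma kappa_bounds (ψ : ℝ → ℝ) (C β₁ β₂ : ℝ) (hC : 1 ≤ C) (hβ₁ : 0 < β₁)
    (h0 : ψ 0 = 0) (hM : StrictMonoOn ψ (Ici 0))
    (hD : ∀ r R : ℝ, 0 < r → r ≤ R →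
      C⁻¹ * (R / r) ^ β₁ ≤ ψ R / ψ r ∧ ψ R / ψ r ≤ C * (R / r) ^ β₂)
    (u : ℝ) (hu : 0 < u) :
    ENNReal.ofReal ((2 * C * (2:ℝ) ^ β₂)⁻¹ * ψ u) ≤ ∫⁻ s in Ioo 0 u, ENNReal.ofReal (ψ s / s) ∧
    ∫⁻ s in Ioo 0 u, ENNReal.ofReal (ψ s / s) ≤ ENNReal.ofReal (C / β₁ * ψ u) := by
  have hC0 : (0:ℝ) < C := lt_of_lt_of_le one_pos hC
  have hpos : ∀ x : ℝ, 0 < x → 0 < ψ x := fun x hx => by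
    have := hM (mem_Ici.2 le_rfl) (mem_Ici.2 hx.le) hx
    rwa [h0] at this
  have hψu : 0 < ψ u := hpos u hu
  have hub : 0 < u ^ β₁ := Real.rpow_pos_of_pos hu _
  have h2b : (0:ℝ) < 2 ^ β₂ := Real.rpow_pos_of_pos two_pos _
  constructor
  · -- lower bound
    have hhalf : 0 < u / 2 := half_pos hu
    have hψh : 0 < ψ (u / 2) := hpos _ hhalf
    have h2 : ψ u ≤ C * 2 ^ β₂ * ψ (u / 2) := by
      have := (hD (u / 2) u hhalf (half_le_self hu.le)).2
      have hrw : u / (u / 2) = 2 := by field_simp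
      rw [hrw, div_le_iff₀ hψh] at this
      linarith
    calc ENNReal.ofReal ((2 * C * (2:ℝ) ^ β₂)⁻¹ * ψ u)
        ≤ ENNReal.ofReal (ψ (u / 2) / u * (u / 2)) := by
          apply ENNReal.ofReal_le_ofReal
          have heq : ψ (u / 2) / u * (u / 2) = ψ (u / 2) / 2 := by field_simp
          rw [heq, inv_mul_le_iff₀ (by positivity)]
          nlinarith
      _ = ENNReal.ofReal (ψ (u / 2) / u) * volume (Ioo (u/2) u) := by
          rw [Real.volume_Ioo, ← ENNReal.ofReal_mul (by positivity)]
          congr 1; ring_nf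
      _ = ∫⁻ _ in Ioo (u/2) u, ENNReal.ofReal (ψ (u / 2) / u) := by
          rw [setLIntegral_const]
      _ ≤ ∫⁻ s in Ioo (u/2) u, ENNReal.ofReal (ψ s / s) := by
          apply setLIntegral_mono_ae' measurableSet_Ioo
          apply ae_of_all
          intro s hs
          apply ENNReal.ofReal_le_ofReal
          apply div_le_div₀ (hpos s (lt_trans hhalf hs.1)).le
            (hM.monotoneOn (mem_Ici.2 hhalf.le) (mem_Ici.2 (lt_trans hhalf hs.1).le) hs.1.le)
            (lt_trans hhalf hs.1) hs.2.le
      _ ≤ ∫⁻ s in Ioo 0 u, ENNReal.ofReal (ψ s / s) :=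
          lintegral_mono_set (Ioo_subset_Ioo_left hhalf.le)
  · -- upper bound
    set A : ℝ := C * ψ u / u ^ β₁ with hA
    have hA0 : 0 < A := by positivity
    have key : ∀ s ∈ Ioo (0:ℝ) u, ψ s / s ≤ A * s ^ (β₁ - 1) := by
      intro s hs
      obtain ⟨hs0, hsu⟩ := hs
      have hψs : 0 < ψ s := hpos s hs0
      have hsb : 0 < s ^ β₁ := Real.rpow_pos_of_pos hs0 _
      have h1 := (hD s u hs0 hsu.le).1
      rw [Real.div_rpow hu.le hs0.le] at h1
      have h1' : u ^ β₁ / (C * s ^ β₁) ≤ ψ u / ψ s := by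
        rw [div_mul_eq_div_div_swap]
        calc u ^ β₁ / s ^ β₁ / C = C⁻¹ * (u ^ β₁ / s ^ β₁) := by ring
          _ ≤ ψ u / ψ s := h1
      rw [div_le_div_iff₀ (by positivity) hψs] at h1'
      have key2 : ψ s * u ^ β₁ ≤ C * ψ u * s ^ β₁ := by nlinarith
      calc ψ s / s = ψ s * u ^ β₁ / (u ^ β₁ * s) := by
            rw [div_eq_div_iff hs0.ne' (by positivity)]; ring
        _ ≤ C * ψ u * s ^ β₁ / (u ^ β₁ * s) := by gcongr
        _ = A * s ^ (β₁ - 1) := by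
            rw [Real.rpow_sub hs0, Real.rpow_one, hA, div_mul_div_comm]
    have hInt : IntegrableOn (fun s : ℝ => A * s ^ (β₁ - 1)) (Ioo 0 u) volume :=
      ((intervalIntegral.intervalIntegrable_rpow' (by linarith)).1.mono_set
        Ioo_subset_Ioc_self).const_mul A
    calc ∫⁻ s in Ioo 0 u, ENNReal.ofReal (ψ s / s)
        ≤ ∫⁻ s in Ioo 0 u, ENNReal.ofReal (A * s ^ (β₁ - 1)) := by
          apply setLIntegral_mono_ae' measurableSet_Ioo
          exact ae_of_all _ fun s hs => ENNReal.ofReal_le_ofReal (key s hs)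
      _ = ENNReal.ofReal (∫ s in Ioo 0 u, A * s ^ (β₁ - 1)) := by
          rw [ofReal_integral_eq_lintegral_ofReal hInt]
          apply (ae_restrict_iff' measurableSet_Ioo).2
          apply ae_of_all
          intro s hs
          have : (0:ℝ) < s ^ (β₁ - 1) := Real.rpow_pos_of_pos hs.1 _
          positivity
      _ = ENNReal.ofReal (C / β₁ * ψ u) := by
          congr 1
          rw [MeasureTheory.integral_const_mul, ← integral_Ioc_eq_integral_Ioo,
            ← intervalIntegral.integral_of_le hu.le, integral_rpow (Or.inl (by linarith)),
            Real.zero_rpow (by rw [sub_add_cancel]; exact hβ₁.ne'), sub_zero, sub_add_cancel, hA]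
          field_simp


private lemma min_comp (ψ : ℝ → ℝ) (h0 : ψ 0 = 0) (hM : StrictMonoOn ψ (Ici 0))
    (m : ℝ) (hm : 0 < m) :
    ψ (min 1 m) ≤ max 1 (max (ψ 1) (ψ 1)⁻¹) * min 1 (ψ m) ∧
    min 1 (ψ m) ≤ max 1 (max (ψ 1) (ψ 1)⁻¹) * ψ (min 1 m) := by
  set K := max 1 (max (ψ 1) (ψ 1)⁻¹) with hK
  have hpos : ∀ x : ℝ, 0 < x → 0 < ψ x := fun x hx => by
    have := hM (mem_Ici.2 le_rfl) (mem_Ici.2 hx.le) hx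
    rwa [h0] at this
  have hP : 0 < ψ 1 := hpos 1 one_pos
  have hK1 : (1:ℝ) ≤ K := le_max_left _ _
  have hKP : ψ 1 ≤ K := le_trans (le_max_left _ _) (le_max_right _ _)
  have hKPi : (ψ 1)⁻¹ ≤ K := le_trans (le_max_right _ _) (le_max_right _ _)
  have hψm : 0 < ψ m := hpos m hm
  rcases le_or_gt m 1 with h | h
  · rw [min_eq_right h]
    have hψm1 : ψ m ≤ ψ 1 := hM.monotoneOn (mem_Ici.2 hm.le) (mem_Ici.2 zero_le_one) h
    constructor
    · rcases le_total (ψ m) 1 with h' | h'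
      · rw [min_eq_right h']; nlinarith
      · rw [min_eq_left h', mul_one]; linarith
    · calc min 1 (ψ m) ≤ ψ m := min_le_right _ _
        _ ≤ K * ψ m := by nlinarith
  · rw [min_eq_left h.le]
    have hψ1m : ψ 1 ≤ ψ m := hM.monotoneOn (mem_Ici.2 zero_le_one) (mem_Ici.2 hm.le) h.le
    constructor
    · rcases le_total (ψ m) 1 with h' | h'
      · rw [min_eq_right h']; nlinarith
      · rw [min_eq_left h', mul_one]; linarith
    · calc min 1 (ψ m) ≤ 1 := min_le_left _ _
        _ ≤ K * ψ 1 := by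
          have h2 := mul_le_mul_of_nonneg_right hKPi hP.le
          rw [inv_mul_cancel₀ hP.ne'] at h2
          exact h2

/-- A scale function: a homeomorphism of `[0,∞)` (encoded as a continuous, strictly
monotone surjection of `Ici 0` onto itself fixing `0`) satisfying the two-sided
power-type doubling estimate with constant `C ≥ 1` and exponents `0 < β₁ ≤ β₂`. -/
def IsScaleFunction (ψ : ℝ → ℝ) (C β₁ β₂ : ℝ) : Prop :=
  1 ≤ C ∧ 0 < β₁ ∧ β₁ ≤ β₂ ∧ ψ 0 = 0 ∧
  ContinuousOn ψ (Ici 0) ∧ StrictMonoOn ψ (Ici 0) ∧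
  (∀ y, 0 ≤ y → ∃ x, 0 ≤ x ∧ ψ x = y) ∧
  ∀ r R : ℝ, 0 < r → r ≤ R →
    C⁻¹ * (R / r) ^ β₁ ≤ ψ R / ψ r ∧ ψ R / ψ r ≤ C * (R / r) ^ β₂
theorem integrability_change_of_variables (ψc ψcinv ψj : ℝ → ℝ)
    (Cc β₁c β₂c Cj β₁j β₂j : ℝ)
    (hψc : IsScaleFunction ψc Cc β₁c β₂c)
    (hψj : IsScaleFunction ψj Cj β₁j β₂j)
    (hinv₁ : ∀ x, 0 ≤ x → ψcinv (ψc x) = x)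
    (hinv₂ : ∀ y, 0 ≤ y → ψc (ψcinv y) = y)
    (hinv₃ : ∀ y, 0 ≤ y → 0 ≤ ψcinv y) :
    IntegrableOn (fun s => ψc s / (s * ψj s)) (Ioo 0 1) volume ↔
    IntegrableOn (fun t => 1 / ψj (ψcinv t)) (Ioo 0 1) volume := by
  obtain ⟨hCc, hb1c, hbc, hc0, hcC, hcM, hcS, hcD⟩ := hψc
  obtain ⟨hCj, hb1j, hbj, hj0, hjC, hjM, hjS, hjD⟩ := hψj
  have hCc0 : (0:ℝ) < Cc := lt_of_lt_of_le one_pos hCc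
  have hcpos : ∀ x : ℝ, 0 < x → 0 < ψc x := fun x hx => by
    have := hcM (mem_Ici.2 le_rfl) (mem_Ici.2 hx.le) hx; rwa [hc0] at this
  have hjpos : ∀ x : ℝ, 0 < x → 0 < ψj x := fun x hx => by
    have := hjM (mem_Ici.2 le_rfl) (mem_Ici.2 hx.le) hx; rwa [hj0] at this
  have hjnn : ∀ x : ℝ, 0 ≤ x → 0 ≤ ψj x := fun x hx => by
    rcases hx.lt_or_eq with h | h
    · exact (hjpos x h).le
    · rw [← h, hj0]
  set Jc : ℝ → ℝ := fun y => ψc (max y 0) with hJc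
  set Jj : ℝ → ℝ := fun y => ψj (max y 0) with hJj
  have hJcCont : Continuous Jc :=
    hcC.comp_continuous (continuous_id.max continuous_const) fun x => mem_Ici.2 (le_max_right _ _)
  have hJjCont : Continuous Jj :=
    hjC.comp_continuous (continuous_id.max continuous_const) fun x => mem_Ici.2 (le_max_right _ _)
  set F : ℝ → ℝ := fun t => if t ≤ 0 then 0 else ψcinv t with hF
  have hinvpos : ∀ t : ℝ, 0 < t → 0 < ψcinv t := by
    intro t ht
    rcases (hinv₃ t ht.le).lt_or_eq with h | h
    · exact h
    · exfalso
      have h2 := hinv₂ t ht.le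
      rw [← h, hc0] at h2
      linarith
  have hFmono : Monotone F := by
    intro a b hab
    simp only [hF]
    by_cases ha : a ≤ 0
    · rw [if_pos ha]
      by_cases hb : b ≤ 0
      · rw [if_pos hb]
      · rw [if_neg hb]; exact hinv₃ b (le_of_lt (not_le.1 hb))
    · have ha' := not_le.1 ha
      have hb : ¬ b ≤ 0 := not_le.2 (lt_of_lt_of_le ha' hab)
      rw [if_neg ha, if_neg hb]
      apply (hcM.le_iff_le (mem_Ici.2 (hinv₃ a ha'.le)) (mem_Ici.2 (hinv₃ b (not_le.1 hb).le))).1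
      rw [hinv₂ a ha'.le, hinv₂ b (not_le.1 hb).le]
      exact hab
  have hFmeas : Measurable F := hFmono.measurable
  set d : ℝ → ℝ≥0∞ := fun s => ENNReal.ofReal (Jc s / s) with hd
  set w : ℝ → ℝ≥0∞ := fun s => ENNReal.ofReal (1 / Jj s) with hw
  have hdmeas : Measurable d := (hJcCont.measurable.div measurable_id).ennreal_ofReal
  have hwmeas : Measurable w := (measurable_const.div hJjCont.measurable).ennreal_ofReal
  set κ : Measure ℝ := (volume.restrict (Ioo (0:ℝ) 1)).withDensity d with hκdef
  -- Step A : integrability ↔ finiteness of the lintegrals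
  have hInt1 : IntegrableOn (fun s => ψc s / (s * ψj s)) (Ioo 0 1) volume ↔
      (∫⁻ s in Ioo (0:ℝ) 1, ENNReal.ofReal (ψc s / (s * ψj s))) < ⊤ := by
    have hnn1 : 0 ≤ᵐ[volume.restrict (Ioo (0:ℝ) 1)] fun s => ψc s / (s * ψj s) :=
      (ae_restrict_iff' measurableSet_Ioo).2 (ae_of_all _ fun s hs =>
        div_nonneg (hcpos s hs.1).le (mul_nonneg hs.1.le (hjpos s hs.1).le))
    have hsm1 : AEStronglyMeasurable (fun s => ψc s / (s * ψj s))
        (volume.restrict (Ioo (0:ℝ) 1)) := by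
      have hmeas : Measurable fun s : ℝ => Jc s / (s * Jj s) :=
        hJcCont.measurable.div (measurable_id.mul hJjCont.measurable)
      apply hmeas.aestronglyMeasurable.congr
      apply (ae_restrict_iff' measurableSet_Ioo).2
      apply ae_of_all
      intro s hs
      simp only [hJc, hJj]
      rw [max_eq_left hs.1.le]
    exact ⟨fun h => (hasFiniteIntegral_iff_ofReal hnn1).1 h.2,
      fun h => ⟨hsm1, (hasFiniteIntegral_iff_ofReal hnn1).2 h⟩⟩
  have hInt2 : IntegrableOn (fun t => 1 / ψj (ψcinv t)) (Ioo 0 1) volume ↔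
      (∫⁻ t in Ioo (0:ℝ) 1, ENNReal.ofReal (1 / ψj (ψcinv t))) < ⊤ := by
    have hnn2 : 0 ≤ᵐ[volume.restrict (Ioo (0:ℝ) 1)] fun t => 1 / ψj (ψcinv t) :=
      (ae_restrict_iff' measurableSet_Ioo).2 (ae_of_all _ fun t ht =>
        one_div_nonneg.2 (hjnn _ (hinv₃ t ht.1.le)))
    have hsm2 : AEStronglyMeasurable (fun t => 1 / ψj (ψcinv t))
        (volume.restrict (Ioo (0:ℝ) 1)) := by
      have hmeas : Measurable fun t : ℝ => 1 / Jj (F t) :=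
        measurable_const.div (hJjCont.measurable.comp hFmeas)
      apply hmeas.aestronglyMeasurable.congr
      apply (ae_restrict_iff' measurableSet_Ioo).2
      apply ae_of_all
      intro t ht
      simp only [hJj, hF]
      rw [if_neg (not_le.2 ht.1), max_eq_left (hinv₃ t ht.1.le)]
    exact ⟨fun h => (hasFiniteIntegral_iff_ofReal hnn2).1 h.2,
      fun h => ⟨hsm2, (hasFiniteIntegral_iff_ofReal hnn2).2 h⟩⟩
  -- Step B : layer cake representation of both lintegrals
  have e1 : (∫⁻ s in Ioo (0:ℝ) 1, ENNReal.ofReal (ψc s / (s * ψj s))) =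
      ∫⁻ l in Ioi (0:ℝ), κ {a : ℝ | l < 1 / Jj a} := by
    have s1 : (∫⁻ s in Ioo (0:ℝ) 1, ENNReal.ofReal (ψc s / (s * ψj s))) =
        ∫⁻ s in Ioo (0:ℝ) 1, d s * w s := by
      apply setLIntegral_congr_fun measurableSet_Ioo
      intro s hs
      have hs0 := hs.1
      simp only [hd, hw, hJc, hJj]
      rw [max_eq_left hs0.le,
        ← ENNReal.ofReal_mul (div_nonneg (hcpos s hs0).le hs0.le),
        div_mul_div_comm, mul_one]
    have s2 : (∫⁻ s in Ioo (0:ℝ) 1, d s * w s) = ∫⁻ s, w s ∂κ := by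
      rw [hκdef, lintegral_withDensity_eq_lintegral_mul (volume.restrict (Ioo (0:ℝ) 1))
        hdmeas hwmeas]
      simp only [Pi.mul_apply]
    have s3 : (∫⁻ s, w s ∂κ) = ∫⁻ l in Ioi (0:ℝ), κ {a : ℝ | l < 1 / Jj a} := by
      apply lintegral_eq_lintegral_meas_lt κ (f := fun s => 1 / Jj s)
      · apply ae_of_all
        intro s
        simp only [hJj]
        exact one_div_nonneg.2 (hjnn _ (le_max_right _ _))
      · exact (measurable_const.div hJjCont.measurable).aemeasurable
    rw [s1, s2, s3]
  have e2 : (∫⁻ t in Ioo (0:ℝ) 1, ENNReal.ofReal (1 / ψj (ψcinv t))) =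
      ∫⁻ l in Ioi (0:ℝ), (volume.restrict (Ioo (0:ℝ) 1)) {a : ℝ | l < 1 / Jj (F a)} := by
    have s4 : (∫⁻ t in Ioo (0:ℝ) 1, ENNReal.ofReal (1 / ψj (ψcinv t))) =
        ∫⁻ t in Ioo (0:ℝ) 1, ENNReal.ofReal (1 / Jj (F t)) := by
      apply setLIntegral_congr_fun measurableSet_Ioo
      intro t ht
      simp only [hJj, hF]
      rw [if_neg (not_le.2 ht.1), max_eq_left (hinv₃ t ht.1.le)]
    have s5 : (∫⁻ t in Ioo (0:ℝ) 1, ENNReal.ofReal (1 / Jj (F t))) =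
        ∫⁻ l in Ioi (0:ℝ), (volume.restrict (Ioo (0:ℝ) 1)) {a : ℝ | l < 1 / Jj (F a)} := by
      apply lintegral_eq_lintegral_meas_lt (volume.restrict (Ioo (0:ℝ) 1))
        (f := fun t => 1 / Jj (F t))
      · apply ae_of_all
        intro t
        simp only [hJj]
        exact one_div_nonneg.2 (hjnn _ (le_max_right _ _))
      · exact (measurable_const.div (hJjCont.measurable.comp hFmeas)).aemeasurable
    rw [s4, s5]
  -- constants
  set K : ℝ := max 1 (max (ψc 1) (ψc 1)⁻¹) with hKdef
  have hK0 : (0:ℝ) < K := lt_of_lt_of_le one_pos (le_max_left _ _)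
  set c₀ : ℝ := (2 * Cc * (2:ℝ) ^ β₂c)⁻¹ with hc₀
  have hc₀pos : 0 < c₀ := inv_pos.2 (mul_pos (mul_pos two_pos hCc0)
    (Real.rpow_pos_of_pos two_pos _))
  set C₁ : ℝ≥0∞ := ENNReal.ofReal (Cc / β₁c * K) with hC₁
  set C₂ : ℝ≥0∞ := ENNReal.ofReal K * (ENNReal.ofReal c₀)⁻¹ with hC₂
  have hC₂top : C₂ ≠ ⊤ := by
    rw [hC₂]
    exact ENNReal.mul_ne_top ENNReal.ofReal_ne_top
      (ENNReal.inv_ne_top.2 (ENNReal.ofReal_pos.2 hc₀pos).ne')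
  -- Step C : pointwise comparison of the layer cake integrands
  have hcomp : ∀ l : ℝ, l ∈ Ioi (0:ℝ) →
      κ {a : ℝ | l < 1 / Jj a} ≤
        C₁ * (volume.restrict (Ioo (0:ℝ) 1)) {a : ℝ | l < 1 / Jj (F a)} ∧
      (volume.restrict (Ioo (0:ℝ) 1)) {a : ℝ | l < 1 / Jj (F a)} ≤
        C₂ * κ {a : ℝ | l < 1 / Jj a} := by
    intro l hl
    rw [mem_Ioi] at hl
    obtain ⟨m, hm0, hmval⟩ := hjS (1 / l) (by positivity)
    have hmpos : 0 < m := by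
      rcases hm0.lt_or_eq with h | h
      · exact h
      · exfalso
        rw [← h, hj0] at hmval
        have h1 : (0:ℝ) < 1 / l := by positivity
        rw [← hmval] at h1
        exact lt_irrefl 0 h1
    have hiff1 : ∀ s : ℝ, 0 < s → (l < 1 / Jj s ↔ s < m) := by
      intro s hs0
      have h2 : Jj s = ψj s := by simp only [hJj]; rw [max_eq_left hs0.le]
      rw [h2, lt_div_iff₀ (hjpos s hs0), mul_comm, ← lt_div_iff₀ hl, ← hmval]
      exact hjM.lt_iff_lt (mem_Ici.2 hs0.le) (mem_Ici.2 hm0)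
    have hiff2 : ∀ t : ℝ, 0 < t → (l < 1 / Jj (F t) ↔ t < ψc m) := by
      intro t ht0
      have hFt : F t = ψcinv t := by simp only [hF]; rw [if_neg (not_le.2 ht0)]
      have hx0 : 0 < ψcinv t := hinvpos t ht0
      have h2 : Jj (ψcinv t) = ψj (ψcinv t) := by simp only [hJj]; rw [max_eq_left hx0.le]
      rw [hFt, h2, lt_div_iff₀ (hjpos _ hx0), mul_comm, ← lt_div_iff₀ hl, ← hmval,
        hjM.lt_iff_lt (mem_Ici.2 hx0.le) (mem_Ici.2 hm0),
        ← hcM.lt_iff_lt (mem_Ici.2 hx0.le) (mem_Ici.2 hm0), hinv₂ t ht0.le]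
    have hset1 : {a : ℝ | l < 1 / Jj a} ∩ Ioo 0 1 = Ioo 0 (min 1 m) := by
      ext x
      simp only [mem_inter_iff, mem_setOf_eq, mem_Ioo, lt_min_iff]
      constructor
      · rintro ⟨hlt, hx0, hx1⟩
        exact ⟨hx0, hx1, (hiff1 x hx0).1 hlt⟩
      · rintro ⟨hx0, hx1, hxm⟩
        exact ⟨(hiff1 x hx0).2 hxm, hx0, hx1⟩
    have hset2 : {a : ℝ | l < 1 / Jj (F a)} ∩ Ioo 0 1 = Ioo 0 (min 1 (ψc m)) := by
      ext x
      simp only [mem_inter_iff, mem_setOf_eq, mem_Ioo, lt_min_iff]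
      constructor
      · rintro ⟨hlt, hx0, hx1⟩
        exact ⟨hx0, hx1, (hiff2 x hx0).1 hlt⟩
      · rintro ⟨hx0, hx1, hxm⟩
        exact ⟨(hiff2 x hx0).2 hxm, hx0, hx1⟩
    have hAmeas : MeasurableSet {a : ℝ | l < 1 / Jj a} :=
      measurableSet_lt measurable_const (measurable_const.div hJjCont.measurable)
    have hκval : κ {a : ℝ | l < 1 / Jj a} =
        ∫⁻ s in Ioo 0 (min 1 m), ENNReal.ofReal (ψc s / s) := by
      rw [hκdef, withDensity_apply _ hAmeas, Measure.restrict_restrict hAmeas, hset1]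
      apply setLIntegral_congr_fun measurableSet_Ioo
      intro x hx
      simp only [hd, hJc]
      rw [max_eq_left hx.1.le]
    have hvol : (volume.restrict (Ioo (0:ℝ) 1)) {a : ℝ | l < 1 / Jj (F a)} =
        ENNReal.ofReal (min 1 (ψc m)) := by
      rw [Measure.restrict_apply' measurableSet_Ioo, hset2, Real.volume_Ioo, sub_zero]
    have hu0 : 0 < min 1 m := lt_min one_pos hmpos
    obtain ⟨hlow, hup⟩ := kappa_bounds ψc Cc β₁c β₂c hCc hb1c hc0 hcM hcD (min 1 m) hu0
    obtain ⟨hk1, hk2⟩ := min_comp ψc hc0 hcM m hmpos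
    constructor
    · rw [hκval, hvol]
      calc (∫⁻ s in Ioo 0 (min 1 m), ENNReal.ofReal (ψc s / s))
          ≤ ENNReal.ofReal (Cc / β₁c * ψc (min 1 m)) := hup
        _ ≤ ENNReal.ofReal (Cc / β₁c * (K * min 1 (ψc m))) :=
            ENNReal.ofReal_le_ofReal
              (mul_le_mul_of_nonneg_left hk1 (div_nonneg hCc0.le hb1c.le))
        _ = C₁ * ENNReal.ofReal (min 1 (ψc m)) := by
            rw [hC₁, ← ENNReal.ofReal_mul (mul_nonneg (div_nonneg hCc0.le hb1c.le) hK0.le),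
              mul_assoc]
    · rw [hκval, hvol]
      have h1 : ENNReal.ofReal (min 1 (ψc m)) ≤
          ENNReal.ofReal K * ENNReal.ofReal (ψc (min 1 m)) := by
        rw [← ENNReal.ofReal_mul hK0.le]
        exact ENNReal.ofReal_le_ofReal hk2
      have h3 : ENNReal.ofReal c₀ * ENNReal.ofReal (ψc (min 1 m)) ≤
          ∫⁻ s in Ioo 0 (min 1 m), ENNReal.ofReal (ψc s / s) := by
        rw [← ENNReal.ofReal_mul hc₀pos.le]
        exact hlow
      have h2 : ENNReal.ofReal (ψc (min 1 m)) ≤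
          (ENNReal.ofReal c₀)⁻¹ * ∫⁻ s in Ioo 0 (min 1 m), ENNReal.ofReal (ψc s / s) := by
        calc ENNReal.ofReal (ψc (min 1 m))
            = (ENNReal.ofReal c₀)⁻¹ * (ENNReal.ofReal c₀ * ENNReal.ofReal (ψc (min 1 m))) := by
              rw [← mul_assoc, ENNReal.inv_mul_cancel (ENNReal.ofReal_pos.2 hc₀pos).ne'
                ENNReal.ofReal_ne_top, one_mul]
          _ ≤ _ := mul_le_mul_right h3 _
      calc ENNReal.ofReal (min 1 (ψc m))
          ≤ ENNReal.ofReal K * ENNReal.ofReal (ψc (min 1 m)) := h1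
        _ ≤ ENNReal.ofReal K *
            ((ENNReal.ofReal c₀)⁻¹ * ∫⁻ s in Ioo 0 (min 1 m), ENNReal.ofReal (ψc s / s)) :=
            mul_le_mul_right h2 _
        _ = C₂ * ∫⁻ s in Ioo 0 (min 1 m), ENNReal.ofReal (ψc s / s) := by
            rw [hC₂, mul_assoc]
  -- Step D : conclude
  have hb1 : (∫⁻ s in Ioo (0:ℝ) 1, ENNReal.ofReal (ψc s / (s * ψj s))) ≤
      C₁ * ∫⁻ t in Ioo (0:ℝ) 1, ENNReal.ofReal (1 / ψj (ψcinv t)) := by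
    rw [e1, e2, ← lintegral_const_mul' C₁ _ (by rw [hC₁]; exact ENNReal.ofReal_ne_top)]
    apply lintegral_mono_ae
    filter_upwards [ae_restrict_mem measurableSet_Ioi] with l hl
    exact (hcomp l hl).1
  have hb2 : (∫⁻ t in Ioo (0:ℝ) 1, ENNReal.ofReal (1 / ψj (ψcinv t))) ≤
      C₂ * ∫⁻ s in Ioo (0:ℝ) 1, ENNReal.ofReal (ψc s / (s * ψj s)) := by
    rw [e1, e2, ← lintegral_const_mul' C₂ _ hC₂top]
    apply lintegral_mono_ae
    filter_upwards [ae_restrict_mem measurableSet_Ioi] with l hl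
    exact (hcomp l hl).2
  rw [hInt1, hInt2]
  constructor
  · intro h
    exact lt_of_le_of_lt hb2 (ENNReal.mul_lt_top hC₂top.lt_top h)
  · intro h
    exact lt_of_le_of_lt hb1
      (ENNReal.mul_lt_top (by rw [hC₁]; exact ENNReal.ofReal_lt_top) h)
end

section
/- Let ψ_c and ψ_j be scale functions with ∫₀¹ ψ_c(s)/(s ψ_j(s)) ds < ∞, and define ψ̂_j(r) = ψ_c(r) / ∫₀^r ψ_c(s)/(s ψ_j(s)) ds for r > 0. Then there exists a constant C ≥ 1 such that ψ̂_j(r) ≤ C ψ_j(r) for all r > 0. -/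
open Set MeasureTheory

theorem hat_psi_j_le_psi_j (ψc ψj : ℝ → ℝ) (Cc β₁c β₂c Cj β₁j β₂j : ℝ)
    (hψc : IsScaleFunction ψc Cc β₁c β₂c)
    (hψj : IsScaleFunction ψj Cj β₁j β₂j)
    (hint : IntegrableOn (fun s => ψc s / (s * ψj s)) (Ioo 0 1) volume) :
    (∀ r : ℝ, 0 < r → IntegrableOn (fun s => ψc s / (s * ψj s)) (Ioo 0 r) volume) ∧
    ∃ C : ℝ, 1 ≤ C ∧ ∀ r : ℝ, 0 < r →
      ψc r / (∫ s in Ioo 0 r, ψc s / (s * ψj s)) ≤ C * ψj r := by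
  obtain ⟨hCc, hβ1c, hβc, hc0, hcCont, hcMono, hcSurj, hcEst⟩ := hψc
  obtain ⟨hCj, hβ1j, hβj, hj0, hjCont, hjMono, hjSurj, hjEst⟩ := hψj
  have hcpos : ∀ s : ℝ, 0 < s → 0 < ψc s := by
    intro s hs
    have := hcMono (mem_Ici.2 le_rfl) (mem_Ici.2 hs.le) hs
    rwa [hc0] at this
  have hjpos : ∀ s : ℝ, 0 < s → 0 < ψj s := by
    intro s hs
    have := hjMono (mem_Ici.2 le_rfl) (mem_Ici.2 hs.le) hs
    rwa [hj0] at this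
  have hInt : ∀ r : ℝ, 0 < r → IntegrableOn (fun s => ψc s / (s * ψj s)) (Ioo 0 r) volume := by
    intro r hr
    rcases le_or_gt r 1 with h | h
    · exact hint.mono_set (Ioo_subset_Ioo_right h)
    · have hIcc : IntegrableOn (fun s => ψc s / (s * ψj s)) (Icc 1 r) volume := by
        apply ContinuousOn.integrableOn_Icc
        apply ContinuousOn.div
        · exact hcCont.mono (fun x hx => le_trans zero_le_one hx.1)
        · exact ContinuousOn.mul continuousOn_id
            (hjCont.mono fun x hx => le_trans zero_le_one hx.1)
        · intro x hx
          have hx0 : (0:ℝ) < x := lt_of_lt_of_le one_pos hx.1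
          exact (mul_pos hx0 (hjpos x hx0)).ne'
      have hsub : Ioo 0 r ⊆ Ioo 0 1 ∪ Icc 1 r := by
        intro x hx
        rcases lt_or_ge x 1 with h1 | h1
        · exact Or.inl ⟨hx.1, h1⟩
        · exact Or.inr ⟨h1, hx.2.le⟩
      exact (hint.union hIcc).mono_set hsub
  refine ⟨hInt, max 1 (2 * Cc * 2 ^ β₂c), le_max_left _ _, ?_⟩
  intro r hr
  set I := ∫ s in Ioo 0 r, ψc s / (s * ψj s) with hI
  have hc_r := hcpos r hr
  have hj_r := hjpos r hr
  have hcc : 0 < Cc := lt_of_lt_of_le one_pos hCc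
  have h2pow : (0:ℝ) < (2:ℝ) ^ β₂c := Real.rpow_pos_of_pos two_pos _
  set c := ψc r / (Cc * 2 ^ β₂c * (r * ψj r)) with hc
  have hcpos' : 0 < c := div_pos hc_r (by positivity)
  have hbound : ∀ s ∈ Ioo (r/2) r, c ≤ ψc s / (s * ψj s) := by
    intro s hs
    have hs0 : 0 < s := lt_trans (by linarith) hs.1
    have hcs := hcpos s hs0
    have hjs := hjpos s hs0
    have hest := (hcEst s r hs0 hs.2.le).2
    have hrs : r / s ≤ 2 := by rw [div_le_iff₀ hs0]; linarith [hs.1]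
    have hrs1 : (1:ℝ) ≤ r / s := (one_le_div hs0).2 hs.2.le
    have hpow : (r/s) ^ β₂c ≤ (2:ℝ) ^ β₂c :=
      Real.rpow_le_rpow (by linarith) hrs (le_trans hβ1c.le hβc)
    have h1 : ψc r / ψc s ≤ Cc * 2 ^ β₂c := le_trans hest (by nlinarith)
    have h2' : ψc r ≤ Cc * 2 ^ β₂c * ψc s := by
      rw [div_le_iff₀ hcs] at h1; linarith
    have hjle : ψj s ≤ ψj r :=
      (hjMono.monotoneOn) (mem_Ici.2 hs0.le) (mem_Ici.2 hr.le) hs.2.le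
    rw [hc, div_le_div_iff₀ (by positivity) (by positivity)]
    calc ψc r * (s * ψj s) ≤ (Cc * 2 ^ β₂c * ψc s) * (r * ψj r) := by
          have hsr : s * ψj s ≤ r * ψj r := mul_le_mul hs.2.le hjle hjs.le hr.le
          nlinarith [mul_pos hs0 hjs]
      _ = ψc s * (Cc * 2 ^ β₂c * (r * ψj r)) := by ring
  have hintr : IntegrableOn (fun s => ψc s / (s * ψj s)) (Ioo (r/2) r) volume :=
    (hInt r hr).mono_set (Ioo_subset_Ioo_left (by linarith))
  have hI1 : c * (r/2) ≤ ∫ s in Ioo (r/2) r, ψc s / (s * ψj s) := by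
    have hconst : IntegrableOn (fun _ : ℝ => c) (Ioo (r/2) r) volume := by
      exact integrableOn_const (by rw [Real.volume_Ioo]; exact ENNReal.ofReal_ne_top)
    have := setIntegral_mono_on hconst hintr measurableSet_Ioo hbound
    rwa [setIntegral_const, Real.volume_real_Ioo_of_le (by linarith : r/2 ≤ r), smul_eq_mul,
      show r - r/2 = r/2 by ring, mul_comm] at this
  have hnonneg : 0 ≤ᵐ[volume.restrict (Ioo 0 r)] fun s => ψc s / (s * ψj s) := by
    filter_upwards [ae_restrict_mem measurableSet_Ioo] with s hs
    exact le_of_lt (div_pos (hcpos s hs.1) (mul_pos hs.1 (hjpos s hs.1)))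
  have hI2 : (∫ s in Ioo (r/2) r, ψc s / (s * ψj s)) ≤ I :=
    setIntegral_mono_set (hInt r hr) hnonneg
      (HasSubset.Subset.eventuallyLE (Ioo_subset_Ioo_left (by linarith)))
  have hle : c * (r/2) ≤ I := le_trans hI1 hI2
  have hIpos : 0 < I := lt_of_lt_of_le (by positivity) hle
  have key : ψc r / I ≤ 2 * Cc * 2 ^ β₂c * ψj r := by
    rw [div_le_iff₀ hIpos]
    have heq : (2 * Cc * 2 ^ β₂c * ψj r) * (c * (r/2)) = ψc r := by
      rw [hc]; field_simp
    nlinarith [mul_pos (show (0:ℝ) < 2 * Cc * 2 ^ β₂c * ψj r by positivity) hcpos']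
  calc ψc r / I ≤ 2 * Cc * 2 ^ β₂c * ψj r := key
    _ ≤ max 1 (2 * Cc * 2 ^ β₂c) * ψj r :=
        mul_le_mul_of_nonneg_right (le_max_right _ _) hj_r.le
end

section
/- Let ψ_c and ψ_j be scale functions with ∫₀¹ ψ_c(s)/(s ψ_j(s)) ds < ∞. Then there exists a constant C > 0 such that ψ_c(r) ≤ C ψ_j(r) for all 0 < r ≤ 1. -/
open Set MeasureTheory

theorem psi_c_le_psi_j_near_zero (ψc ψj : ℝ → ℝ) (Cc β₁c β₂c Cj β₁j β₂j : ℝ)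
    (hψc : IsScaleFunction ψc Cc β₁c β₂c)
    (hψj : IsScaleFunction ψj Cj β₁j β₂j)
    (hint : IntegrableOn (fun s => ψc s / (s * ψj s)) (Ioo 0 1) volume) :
    ∃ C : ℝ, 0 < C ∧ ∀ r : ℝ, 0 < r → r ≤ 1 → ψc r ≤ C * ψj r := by
  obtain ⟨hCc1, hβ1c, hβc, hψc0, _, hψcmono, _, hψcest⟩ := hψc
  obtain ⟨hCj1, hβ1j, hβj, hψj0, _, hψjmono, _, _⟩ := hψj
  have hCc0 : (0:ℝ) < Cc := lt_of_lt_of_le one_pos hCc1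
  have hβ2c : (0:ℝ) < β₂c := lt_of_lt_of_le hβ1c hβc
  -- positivity of ψc, ψj on positives
  have hψcpos : ∀ x : ℝ, 0 < x → 0 < ψc x := fun x hx => by
    have := hψcmono (Set.mem_Ici.mpr (le_refl (0:ℝ))) (le_of_lt hx) hx
    rwa [hψc0] at this
  have hψjpos : ∀ x : ℝ, 0 < x → 0 < ψj x := fun x hx => by
    have := hψjmono (Set.mem_Ici.mpr (le_refl (0:ℝ))) (le_of_lt hx) hx
    rwa [hψj0] at this
  set f : ℝ → ℝ := fun s => ψc s / (s * ψj s) with hf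
  set I : ℝ := ∫ s in Ioo (0:ℝ) 1, f s with hI
  have hfnonneg : ∀ x ∈ Ioo (0:ℝ) 1, 0 ≤ f x := by
    intro x hx
    exact div_nonneg (hψcpos x hx.1).le (mul_nonneg hx.1.le (hψjpos x hx.1).le)
  have hInonneg : 0 ≤ I := setIntegral_nonneg measurableSet_Ioo hfnonneg
  set A : ℝ := Cc * 2 ^ β₂c with hA
  have hApos : 0 < A := mul_pos hCc0 (Real.rpow_pos_of_pos two_pos _)
  refine ⟨2 * A * I + 1, by positivity, ?_⟩
  intro r hr hr1
  have hψjr := hψjpos r hr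
  have hψcr := hψcpos r hr
  have hsub : Ioo (r/2) r ⊆ Ioo (0:ℝ) 1 := fun x hx =>
    ⟨lt_trans (by linarith) hx.1, lt_of_lt_of_le hx.2 hr1⟩
  set m : ℝ := (ψc r / A) / (r * ψj r) with hm
  have hlow : ∀ x ∈ Ioo (r/2) r, m ≤ f x := by
    intro x hx
    have hx0 : 0 < x := lt_trans (by linarith) hx.1
    have hxr : x ≤ r := hx.2.le
    have hest := (hψcest x r hx0 hxr).2
    have hrx2 : r / x ≤ 2 := by
      rw [div_le_iff₀ hx0]; linarith [hx.1]
    have hpow : (r / x) ^ β₂c ≤ (2:ℝ) ^ β₂c :=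
      Real.rpow_le_rpow (div_pos hr hx0).le hrx2 hβ2c.le
    have hψcx := hψcpos x hx0
    have h1 : ψc r / A ≤ ψc x := by
      rw [div_le_iff₀ hApos]
      have : ψc r / ψc x ≤ A := le_trans hest (by
        rw [hA]
        exact mul_le_mul_of_nonneg_left hpow hCc0.le)
      calc ψc r = (ψc r / ψc x) * ψc x := by field_simp
        _ ≤ A * ψc x := mul_le_mul_of_nonneg_right this hψcx.le
        _ = ψc x * A := mul_comm _ _
    have hψjx := hψjpos x hx0
    have h2 : x * ψj x ≤ r * ψj r := by
      have : ψj x ≤ ψj r := (hψjmono hx0.le hr.le hx.2).le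
      exact mul_le_mul hxr this hψjx.le hr.le
    exact div_le_div₀ hψcx.le h1 (mul_pos hx0 hψjx) h2
  have hintsub : IntegrableOn f (Ioo (r/2) r) volume := hint.mono_set hsub
  have hvol : (volume (Ioo (r/2) r)).toReal = r / 2 := by
    rw [Real.volume_Ioo, ENNReal.toReal_ofReal (by linarith)]
    ring
  have hlower : m * (r / 2) ≤ ∫ x in Ioo (r/2) r, f x := by
    have := setIntegral_ge_of_const_le measurableSet_Ioo
      (by simp [Real.volume_Ioo]) hlow hintsub
    rw [measureReal_def, hvol, smul_eq_mul] at this; linarith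
  have hupper : (∫ x in Ioo (r/2) r, f x) ≤ I := by
    apply setIntegral_mono_set hint
    · exact (ae_restrict_iff' measurableSet_Ioo).2 (ae_of_all _ hfnonneg)
    · exact HasSubset.Subset.eventuallyLE hsub
  have hkey : m * (r / 2) ≤ I := le_trans hlower hupper
  have hmval : m * (r / 2) = ψc r / (2 * A * ψj r) := by
    rw [hm]; field_simp
  rw [hmval] at hkey
  rw [div_le_iff₀ (by positivity)] at hkey
  nlinarith [hψjr, hψcr, hApos, hInonneg]
end

section
/- Let ψ_c, ψ_j be scale functions and let V : (0,∞) → (0,∞) be a function satisfying the doubling-type estimate c(R/r)^{α₁} ≤ V(R)/V(r) ≤ C(R/r)^{α₂} for 0 < r ≤ R with 0 < α₁ ≤ α₂. Fix d > 0 and suppose p : (0,∞) → [0,∞) satisfies p(t) ≤ C₁/V(ψ_c⁻¹(t)) · exp(−c₁ Φ(c₂ d, t)) for all t > 0, and p(t) ≥ c₃/V(ψ_c⁻¹(t)) for all t with d ≤ δ ψ_c⁻¹(t), where Φ(R,t) = sup_{r>0}(R/r − t/ψ_c(r)) and ψ_c has lower exponent β₁ > 1. Then ∫₀^∞ p(t)/(t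 ψ_j(ψ_c⁻¹(t))) dt ≍ 1/(V(d) ψ_j(d)), with comparison constants independent of d. -/
open Set MeasureTheory

private lemma rpow_rpow_inv' {x e : ℝ} (hx : 0 ≤ x) (he : e ≠ 0) : (x ^ e) ^ e⁻¹ = x := by
  rw [← Real.rpow_mul hx, mul_inv_cancel₀ he, Real.rpow_one]

private lemma rpow_inv_rpow' {x e : ℝ} (hx : 0 ≤ x) (he : e ≠ 0) : (x ^ e⁻¹) ^ e = x := by
  rw [← Real.rpow_mul hx, inv_mul_cancel₀ he, Real.rpow_one]

private lemma rpow_mul_exp_neg_le {γ a x : ℝ} (hγ : 0 < γ) (ha : 0 < a) (hx : 0 ≤ x) :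
    x ^ γ * Real.exp (-(a * x)) ≤ (γ / a) ^ γ := by
  rcases hx.eq_or_lt with h | hx'
  · rw [← h, Real.zero_rpow hγ.ne', zero_mul]
    positivity
  · have hγ' : γ ≠ 0 := hγ.ne'
    have ha' : a ≠ 0 := ha.ne'
    have h2 : a / γ * x ≤ Real.exp (a / γ * x) := by
      have := Real.add_one_le_exp (a / γ * x)
      linarith
    have h1 : x ≤ γ / a * Real.exp (a / γ * x) := by
      calc x = γ / a * (a / γ * x) := by field_simp
        _ ≤ γ / a * Real.exp (a / γ * x) := by
            apply mul_le_mul_of_nonneg_left h2 (by positivity)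
    have h3 : x ^ γ ≤ (γ / a) ^ γ * Real.exp (a * x) := by
      calc x ^ γ ≤ (γ / a * Real.exp (a / γ * x)) ^ γ := Real.rpow_le_rpow hx h1 hγ.le
        _ = (γ / a) ^ γ * Real.exp (a / γ * x) ^ γ :=
            Real.mul_rpow (by positivity) (Real.exp_pos _).le
        _ = (γ / a) ^ γ * Real.exp (a / γ * x * γ) := by rw [← Real.exp_mul]
        _ = (γ / a) ^ γ * Real.exp (a * x) := by
            rw [show a / γ * x * γ = a * x by field_simp]
    calc x ^ γ * Real.exp (-(a * x))
        ≤ (γ / a) ^ γ * Real.exp (a * x) * Real.exp (-(a * x)) :=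
          mul_le_mul_of_nonneg_right h3 (Real.exp_pos _).le
      _ = (γ / a) ^ γ := by rw [mul_assoc, ← Real.exp_add]; simp

private lemma exp_neg_le_rpow {m b u : ℝ} (hm : 0 < m) (hb : 0 < b) (hu : 0 < u) :
    Real.exp (-(b * u)) ≤ (m / b) ^ m * u ^ (-m) := by
  have h := rpow_mul_exp_neg_le hm hb hu.le
  have hum : (0:ℝ) < u ^ m := Real.rpow_pos_of_pos hu m
  rw [Real.rpow_neg hu.le, ← div_eq_mul_inv, le_div_iff₀ hum]
  calc Real.exp (-(b * u)) * u ^ m = u ^ m * Real.exp (-(b * u)) := by ring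
    _ ≤ (m / b) ^ m := h

private lemma young_bound {A a β w : ℝ} (hA : 0 < A) (ha : 0 < a) (hβ : 1 < β) (hw : 0 ≤ w) :
    A * w - a * w ^ β ≤ A * (A / a) ^ (β - 1)⁻¹ := by
  set W := (A / a) ^ (β - 1)⁻¹ with hW
  have hWpos : 0 < W := Real.rpow_pos_of_pos (div_pos hA ha) _
  have hβ1 : 0 < β - 1 := by linarith
  rcases le_or_gt w W with h | h
  · have h0 : 0 ≤ a * w ^ β := by positivity
    nlinarith [mul_le_mul_of_nonneg_left h hA.le]
  · have hwpos : 0 < w := hWpos.trans h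
    have h1 : W ^ (β - 1) = A / a := rpow_inv_rpow' (div_pos hA ha).le hβ1.ne'
    have h2 : W ^ (β - 1) ≤ w ^ (β - 1) := Real.rpow_le_rpow hWpos.le h.le hβ1.le
    have h3 : w ^ β = w ^ (β - 1) * w := by
      have := Real.rpow_add hwpos (β - 1) 1
      rw [sub_add_cancel, Real.rpow_one] at this
      exact this
    have h4 : A * w ≤ a * w ^ β := by
      rw [h3]
      calc A * w = a * (A / a) * w := by field_simp
        _ = a * W ^ (β - 1) * w := by rw [h1]
        _ ≤ a * w ^ (β - 1) * w := by
            apply mul_le_mul_of_nonneg_right (mul_le_mul_of_nonneg_left h2 ha.le) hwpos.le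
        _ = a * (w ^ (β - 1) * w) := by ring
    nlinarith [mul_pos hA hWpos]

set_option maxHeartbeats 2000000 in
theorem subordination_integral_estimate (ψc ψcinv ψj : ℝ → ℝ)
    (Cc β₁c β₂c Cj β₁j β₂j : ℝ)
    (hψc : IsScaleFunction ψc Cc β₁c β₂c) (hβ : 1 < β₁c)
    (hψj : IsScaleFunction ψj Cj β₁j β₂j)
    (hinv₁ : ∀ x, 0 ≤ x → ψcinv (ψc x) = x)
    (hinv₂ : ∀ y, 0 ≤ y → ψc (ψcinv y) = y)
    (hinv₃ : ∀ y, 0 ≤ y → 0 ≤ ψcinv y)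
    (V : ℝ → ℝ) (c C α₁ α₂ : ℝ) (hc : 0 < c) (hC : 0 < C)
    (hα₁ : 0 < α₁) (hα₁₂ : α₁ ≤ α₂)
    (hVpos : ∀ r : ℝ, 0 < r → 0 < V r)
    (hV : ∀ r R : ℝ, 0 < r → r ≤ R →
      c * (R / r) ^ α₁ ≤ V R / V r ∧ V R / V r ≤ C * (R / r) ^ α₂)
    (C₁ c₁ c₂ c₃ δ : ℝ) (hC₁ : 0 < C₁) (hc₁ : 0 < c₁) (hc₂ : 0 < c₂)
    (hc₃ : 0 < c₃) (hδ : 0 < δ) :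
    ∃ K : ℝ, 1 ≤ K ∧ ∀ d : ℝ, 0 < d → ∀ p : ℝ → ℝ, Measurable p →
      (∀ t : ℝ, 0 < t → 0 ≤ p t) →
      (∀ t : ℝ, 0 < t → p t ≤ C₁ / V (ψcinv t) *
        Real.exp (-(c₁ * sSup {x : ℝ | ∃ r : ℝ, 0 < r ∧ x = c₂ * d / r - t / ψc r}))) →
      (∀ t : ℝ, 0 < t → d ≤ δ * ψcinv t → c₃ / V (ψcinv t) ≤ p t) →
      IntegrableOn (fun t => p t / (t * ψj (ψcinv t))) (Ioi 0) volume ∧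
      K⁻¹ * (1 / (V d * ψj d)) ≤ (∫ t in Ioi (0:ℝ), p t / (t * ψj (ψcinv t))) ∧
      (∫ t in Ioi (0:ℝ), p t / (t * ψj (ψcinv t))) ≤ K * (1 / (V d * ψj d)) := by
  obtain ⟨hCc1, hβ₁cpos, hβcle, hψc0, _, hψcSM, _, hψcD⟩ := hψc
  obtain ⟨hCj1, hβ₁jpos, hβjle, hψj0, _, hψjSM, _, hψjD⟩ := hψj
  have hCc : (0:ℝ) < Cc := lt_of_lt_of_le one_pos hCc1
  have hCj : (0:ℝ) < Cj := lt_of_lt_of_le one_pos hCj1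
  have hβ₂c : 0 < β₂c := lt_of_lt_of_le hβ₁cpos hβcle
  have hβ₂j : 0 < β₂j := lt_of_lt_of_le hβ₁jpos hβjle
  have hα₂ : 0 < α₂ := lt_of_lt_of_le hα₁ hα₁₂
  -- basic positivity and monotonicity facts
  have hψcpos : ∀ r : ℝ, 0 < r → 0 < ψc r := by
    intro r hr
    have := hψcSM (mem_Ici.2 le_rfl) (mem_Ici.2 hr.le) hr
    rwa [hψc0] at this
  have hψjpos : ∀ r : ℝ, 0 < r → 0 < ψj r := by
    intro r hr
    have := hψjSM (mem_Ici.2 le_rfl) (mem_Ici.2 hr.le) hr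
    rwa [hψj0] at this
  have hψjmono : ∀ a b : ℝ, 0 ≤ a → a ≤ b → ψj a ≤ ψj b := by
    intro a b ha hab
    exact hψjSM.monotoneOn (mem_Ici.2 ha) (mem_Ici.2 (ha.trans hab)) hab
  have hinvmono : ∀ y₁ y₂ : ℝ, 0 ≤ y₁ → y₁ ≤ y₂ → ψcinv y₁ ≤ ψcinv y₂ := by
    intro y₁ y₂ h1 h12
    by_contra hlt
    push_neg at hlt
    have := hψcSM (mem_Ici.2 (hinv₃ y₂ (h1.trans h12))) (mem_Ici.2 (hinv₃ y₁ h1)) hlt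
    rw [hinv₂ y₁ h1, hinv₂ y₂ (h1.trans h12)] at this
    linarith only [this, h12]
  have hinvpos : ∀ y : ℝ, 0 < y → 0 < ψcinv y := by
    intro y hy
    rcases (hinv₃ y hy.le).eq_or_lt with h | h
    · exfalso
      have h2 := hinv₂ y hy.le
      rw [← h, hψc0] at h2
      linarith
    · exact h
  -- multiplicative doubling
  have hψcD₁ : ∀ r R : ℝ, 0 < r → r ≤ R → Cc⁻¹ * (R / r) ^ β₁c * ψc r ≤ ψc R := by
    intro r R hr hrR
    exact (le_div_iff₀ (hψcpos r hr)).1 (hψcD r R hr hrR).1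
  have hψcD₂ : ∀ r R : ℝ, 0 < r → r ≤ R → ψc R ≤ Cc * (R / r) ^ β₂c * ψc r := by
    intro r R hr hrR
    exact (div_le_iff₀ (hψcpos r hr)).1 (hψcD r R hr hrR).2
  have hψjD₂ : ∀ r R : ℝ, 0 < r → r ≤ R → ψj R ≤ Cj * (R / r) ^ β₂j * ψj r := by
    intro r R hr hrR
    exact (div_le_iff₀ (hψjpos r hr)).1 (hψjD r R hr hrR).2
  have hVD₁ : ∀ r R : ℝ, 0 < r → r ≤ R → c * (R / r) ^ α₁ * V r ≤ V R := by
    intro r R hr hrR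
    exact (le_div_iff₀ (hVpos r hr)).1 (hV r R hr hrR).1
  have hVD₂ : ∀ r R : ℝ, 0 < r → r ≤ R → V R ≤ C * (R / r) ^ α₂ * V r := by
    intro r R hr hrR
    exact (div_le_iff₀ (hVpos r hr)).1 (hV r R hr hrR).2
  -- constants
  set θ : ℝ := β₂c⁻¹ * α₁ with hθdef
  have hθpos : 0 < θ := by positivity
  set ε : ℝ := c₁ * c₂ with hεdef
  have hεpos : 0 < ε := mul_pos hc₁ hc₂
  set γ : ℝ := α₂ + β₂j with hγdef
  have hγpos : 0 < γ := by positivity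
  set κ : ℝ := Cc ^ (-β₂c⁻¹) with hκdef
  have hκpos : 0 < κ := Real.rpow_pos_of_pos hCc _
  set b : ℝ := ε / 2 * κ with hbdef
  have hbpos : 0 < b := by positivity
  set M₁ : ℝ := (γ / (ε / 2)) ^ γ with hM₁def
  have hM₁pos : 0 < M₁ := Real.rpow_pos_of_pos (by positivity) _
  set M₂ : ℝ := (2 * β₂c / b) ^ (2 * β₂c) with hM₂def
  have hM₂pos : 0 < M₂ := Real.rpow_pos_of_pos (by positivity) _
  set Ks : ℝ := C₁ * Real.exp c₁ * C * Cj * (M₁ * M₂) with hKsdef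
  have hKspos : 0 < Ks := by positivity
  set Kt : ℝ := C₁ * Real.exp c₁ * Cc ^ θ * c⁻¹ with hKtdef
  have hKtpos : 0 < Kt := by positivity
  set lam : ℝ := (2 * Cc) ^ β₁c⁻¹ / δ with hlamdef
  have hlampos : 0 < lam := by positivity
  set M : ℝ := max (1 / c) (C * Cj * lam ^ α₂ * lam ^ β₂j) with hMdef
  have hMpos : 0 < M := lt_of_lt_of_le (by positivity) (le_max_left _ _)
  set KU : ℝ := Ks + Kt * θ⁻¹ with hKUdef
  have hKUpos : 0 < KU := by positivity
  set KL : ℝ := c₃ / (2 * M) with hKLdef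
  have hKLpos : 0 < KL := by positivity
  refine ⟨max 1 (max KU KL⁻¹), le_max_left _ _, ?_⟩
  set K : ℝ := max 1 (max KU KL⁻¹) with hKdef
  have hKpos : 0 < K := lt_of_lt_of_le one_pos (le_max_left _ _)
  have hKU : KU ≤ K := le_trans (le_max_left _ _) (le_max_right _ _)
  have hKinv : K⁻¹ ≤ KL := by
    have h1 : KL⁻¹ ≤ K := le_trans (le_max_right _ _) (le_max_right _ _)
    have := inv_anti₀ (inv_pos.2 hKLpos) h1
    rwa [inv_inv] at this
  intro d hd p hpm hp0 hpu hpl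
  have hVd : 0 < V d := hVpos d hd
  have hψjd : 0 < ψj d := hψjpos d hd
  have hVψjd : 0 < V d * ψj d := mul_pos hVd hψjd
  set T₁ : ℝ := ψc d with hT₁def
  have hT₁ : 0 < T₁ := hψcpos d hd
  set F : ℝ → ℝ := fun t => p t / (t * ψj (ψcinv t)) with hFdef
  -- nonnegativity
  have hF0 : ∀ t : ℝ, 0 < t → 0 ≤ F t := by
    intro t ht
    have hs := hinvpos t ht
    have := hψjpos _ hs
    exact div_nonneg (hp0 t ht) (by positivity)
  -- measurability
  have hFmeas : AEStronglyMeasurable F (volume.restrict (Ioi (0:ℝ))) := by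
    have hg : Monotone (fun y : ℝ => ψj (ψcinv (max y 0))) := by
      intro y₁ y₂ h
      have h0₁ : (0:ℝ) ≤ max y₁ 0 := le_max_right _ _
      have h0₂ : (0:ℝ) ≤ max y₂ 0 := le_max_right _ _
      have hm := hinvmono _ _ h0₁ (max_le_max h le_rfl)
      exact hψjSM.monotoneOn (mem_Ici.2 (hinv₃ _ h0₁)) (mem_Ici.2 (hinv₃ _ h0₂)) hm
    have hmeas : Measurable (fun t : ℝ => p t / (t * ψj (ψcinv (max t 0)))) :=
      hpm.div (measurable_id.mul hg.measurable)
    refine hmeas.aestronglyMeasurable.congr ?_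
    filter_upwards [ae_restrict_mem measurableSet_Ioi] with t ht
    simp only [mem_Ioi] at ht
    rw [max_eq_left ht.le]
  -- the Φ lower bound
  have hPhi : ∀ t : ℝ, 0 < t →
      c₂ * d / ψcinv t - 1 ≤ sSup {x : ℝ | ∃ r : ℝ, 0 < r ∧ x = c₂ * d / r - t / ψc r} := by
    intro t ht
    have hspos : 0 < ψcinv t := hinvpos t ht
    set s := ψcinv t with hs
    have hst : ψc s = t := hinv₂ t ht.le
    have hds : 0 < c₂ * d / s := by positivity
    have hbdd : BddAbove {x : ℝ | ∃ r : ℝ, 0 < r ∧ x = c₂ * d / r - t / ψc r} := by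
      refine ⟨max (c₂ * d / s) (c₂ * d / s * (c₂ * d / s / Cc⁻¹) ^ (β₁c - 1)⁻¹), ?_⟩
      rintro x ⟨r, hr, rfl⟩
      have hψr := hψcpos r hr
      rcases le_or_gt s r with hcase | hcase
      · -- r ≥ s : drop the negative term
        have hle : c₂ * d / r ≤ c₂ * d / s :=
          div_le_div_of_nonneg_left (by positivity) hspos hcase
        have h0 : 0 ≤ t / ψc r := by positivity
        have hm := le_max_left (c₂ * d / s) (c₂ * d / s * (c₂ * d / s / Cc⁻¹) ^ (β₁c - 1)⁻¹)
        linarith only [hle, h0, hm]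
      · -- r < s : use the doubling lower bound and Young's trick
        have hrs : r ≤ s := hcase.le
        have hdb := hψcD₁ r s hr hrs
        rw [hst] at hdb
        have h1 : Cc⁻¹ * (s / r) ^ β₁c ≤ t / ψc r := by
          rw [le_div_iff₀ hψr]; exact hdb
        set w : ℝ := s / r with hw
        have hwpos : 0 < w := by positivity
        have h2 : c₂ * d / r = c₂ * d / s * w := by
          rw [hw]; field_simp
        have h3 : c₂ * d / r - t / ψc r ≤ c₂ * d / s * w - Cc⁻¹ * w ^ β₁c := by
          rw [h2]; linarith
        have h4 := young_bound hds (inv_pos.2 hCc) hβ hwpos.le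
        have hm := le_max_right (c₂ * d / s) (c₂ * d / s * (c₂ * d / s / Cc⁻¹) ^ (β₁c - 1)⁻¹)
        linarith only [h3, h4, hm]
    have hmem : c₂ * d / ψcinv t - 1 ∈
        {x : ℝ | ∃ r : ℝ, 0 < r ∧ x = c₂ * d / r - t / ψc r} := by
      refine ⟨s, hspos, ?_⟩
      rw [hst, div_self ht.ne']
    exact le_csSup hbdd hmem
  have hexp : ∀ t : ℝ, 0 < t →
      Real.exp (-(c₁ * sSup {x : ℝ | ∃ r : ℝ, 0 < r ∧ x = c₂ * d / r - t / ψc r})) ≤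
        Real.exp c₁ * Real.exp (-(ε * (d / ψcinv t))) := by
    intro t ht
    rw [← Real.exp_add]
    apply Real.exp_le_exp.2
    have h := mul_le_mul_of_nonneg_left (hPhi t ht) hc₁.le
    have h2 : c₁ * (c₂ * d / ψcinv t - 1) = ε * (d / ψcinv t) - c₁ := by
      rw [hεdef]; ring
    rw [h2] at h
    linarith only [h]
  -- pointwise bound for small t
  have hF_small : ∀ t : ℝ, 0 < t → t ≤ T₁ →
      F t ≤ Ks * (V d * ψj d)⁻¹ * (t / T₁ ^ 2) := by
    intro t ht htT
    have hspos : 0 < ψcinv t := hinvpos t ht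
    set s := ψcinv t with hs
    have hst : ψc s = t := hinv₂ t ht.le
    have hVs : 0 < V s := hVpos s hspos
    have hψjs : 0 < ψj s := hψjpos s hspos
    have hsd : s ≤ d := by
      have := hinvmono t T₁ ht.le htT
      rwa [hT₁def, hinv₁ d hd.le] at this
    set x : ℝ := d / s with hx
    have hxpos : 0 < x := by positivity
    have hx1 : 1 ≤ x := (one_le_div hspos).2 hsd
    -- inverse volume bounds
    have hVinv : (V s)⁻¹ ≤ C * x ^ α₂ * (V d)⁻¹ := by
      have h1 := hVD₂ s d hspos hsd
      rw [← hx] at h1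
      rw [inv_eq_one_div, inv_eq_one_div, mul_one_div, div_le_div_iff₀ hVs hVd, one_mul]
      exact h1
    have hψjinv : (ψj s)⁻¹ ≤ Cj * x ^ β₂j * (ψj d)⁻¹ := by
      have h1 := hψjD₂ s d hspos hsd
      rw [← hx] at h1
      rw [inv_eq_one_div, inv_eq_one_div, mul_one_div, div_le_div_iff₀ hψjs hψjd, one_mul]
      exact h1
    -- key exponential estimate
    have hu : (T₁ / (Cc * t)) ^ β₂c⁻¹ ≤ x := by
      have h1 := hψcD₂ s d hspos hsd
      rw [← hx, hst, ← hT₁def] at h1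
      have h2 : T₁ / (Cc * t) ≤ x ^ β₂c := by
        rw [div_le_iff₀ (by positivity)]
        linarith only [h1]
      have h3 := Real.rpow_le_rpow (by positivity) h2 (inv_nonneg.2 hβ₂c.le)
      rwa [rpow_rpow_inv' hxpos.le hβ₂c.ne'] at h3
    set u : ℝ := (T₁ / t) ^ β₂c⁻¹ with hu2
    have hupos : 0 < u := Real.rpow_pos_of_pos (by positivity) _
    have hκu : (T₁ / (Cc * t)) ^ β₂c⁻¹ = κ * u := by
      rw [hu2, hκdef, show T₁ / (Cc * t) = Cc⁻¹ * (T₁ / t) by field_simp,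
        Real.mul_rpow (by positivity) (by positivity), Real.inv_rpow hCc.le,
        ← Real.rpow_neg hCc.le]
    have hxκu : κ * u ≤ x := by rw [← hκu]; exact hu
    have h5 : x ^ γ * Real.exp (-(ε * x)) ≤ M₁ * M₂ * (t / T₁) ^ 2 := by
      have hsplit : Real.exp (-(ε * x)) =
          Real.exp (-(ε / 2 * x)) * Real.exp (-(ε / 2 * x)) := by
        rw [← Real.exp_add]; ring_nf
      have e1 : x ^ γ * Real.exp (-(ε / 2 * x)) ≤ M₁ :=
        rpow_mul_exp_neg_le hγpos (by positivity) hxpos.le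
      have e3 : Real.exp (-(ε / 2 * x)) ≤ Real.exp (-(b * u)) := by
        apply Real.exp_le_exp.2
        have h6 := mul_le_mul_of_nonneg_left hxκu (show (0:ℝ) ≤ ε / 2 by positivity)
        rw [hbdef]
        linarith only [h6]
      have e4 : Real.exp (-(b * u)) ≤ M₂ * u ^ (-(2 * β₂c)) := by
        rw [hM₂def]
        exact exp_neg_le_rpow (by positivity) hbpos hupos
      have e5 : u ^ (-(2 * β₂c)) = (t / T₁) ^ 2 := by
        rw [hu2, ← Real.rpow_mul (by positivity)]
        have h7 : β₂c⁻¹ * -(2 * β₂c) = (-2 : ℝ) := by field_simp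
        rw [h7, Real.rpow_neg (by positivity),
          show ((2:ℝ)) = ((2:ℕ):ℝ) by norm_num, Real.rpow_natCast, ← inv_pow, inv_div]
      calc x ^ γ * Real.exp (-(ε * x))
          = x ^ γ * Real.exp (-(ε / 2 * x)) * Real.exp (-(ε / 2 * x)) := by
            rw [hsplit]; ring
        _ ≤ M₁ * (M₂ * u ^ (-(2 * β₂c))) := by
            apply mul_le_mul e1 (e3.trans e4) (Real.exp_pos _).le hM₁pos.le
        _ = M₁ * M₂ * (t / T₁) ^ 2 := by rw [e5]; ring
    -- the upper heat kernel bound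
    have hp1 : p t ≤ C₁ * (V s)⁻¹ * (Real.exp c₁ * Real.exp (-(ε * x))) := by
      have h1 := hpu t ht
      have h2 := hexp t ht
      calc p t ≤ C₁ / V s *
            Real.exp (-(c₁ * sSup {x : ℝ | ∃ r : ℝ, 0 < r ∧ x = c₂ * d / r - t / ψc r})) := h1
        _ ≤ C₁ / V s * (Real.exp c₁ * Real.exp (-(ε * (d / s)))) := by
            apply mul_le_mul_of_nonneg_left h2 (by positivity)
        _ = C₁ * (V s)⁻¹ * (Real.exp c₁ * Real.exp (-(ε * x))) := by
            rw [div_eq_mul_inv, hx]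
    have htn : t ≠ 0 := ht.ne'
    calc F t = p t / (t * ψj s) := rfl
      _ ≤ (C₁ * (V s)⁻¹ * (Real.exp c₁ * Real.exp (-(ε * x)))) / (t * ψj s) := by
          have hden : 0 < t * ψj s := by positivity
          exact (div_le_div_iff_of_pos_right hden).2 hp1
      _ = C₁ * Real.exp c₁ * ((V s)⁻¹ * (ψj s)⁻¹) * (Real.exp (-(ε * x)) * t⁻¹) := by
          field_simp
      _ ≤ C₁ * Real.exp c₁ * ((C * x ^ α₂ * (V d)⁻¹) * (Cj * x ^ β₂j * (ψj d)⁻¹)) *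
            (Real.exp (-(ε * x)) * t⁻¹) := by
          gcongr
      _ = C₁ * Real.exp c₁ * C * Cj * ((V d)⁻¹ * (ψj d)⁻¹) *
            (x ^ α₂ * x ^ β₂j * Real.exp (-(ε * x))) * t⁻¹ := by ring
      _ = C₁ * Real.exp c₁ * C * Cj * ((V d)⁻¹ * (ψj d)⁻¹) *
            (x ^ γ * Real.exp (-(ε * x))) * t⁻¹ := by
          rw [hγdef, Real.rpow_add hxpos]
      _ ≤ C₁ * Real.exp c₁ * C * Cj * ((V d)⁻¹ * (ψj d)⁻¹) *
            (M₁ * M₂ * (t / T₁) ^ 2) * t⁻¹ := by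
          gcongr
      _ = Ks * (V d * ψj d)⁻¹ * (t / T₁ ^ 2) := by
          rw [hKsdef]
          field_simp
  -- pointwise bound for large t
  have hF_tail : ∀ t : ℝ, T₁ < t →
      F t ≤ Kt * (V d * ψj d)⁻¹ * T₁ ^ θ * t ^ (-θ - 1) := by
    intro t htT
    have ht : 0 < t := hT₁.trans htT
    have hspos : 0 < ψcinv t := hinvpos t ht
    set s := ψcinv t with hs
    have hst : ψc s = t := hinv₂ t ht.le
    have hVs : 0 < V s := hVpos s hspos
    have hψjs : 0 < ψj s := hψjpos s hspos
    have hds : d ≤ s := by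
      have := hinvmono T₁ t hT₁.le htT.le
      rwa [hT₁def, hinv₁ d hd.le] at this
    have hp1 : p t ≤ C₁ * (V s)⁻¹ * Real.exp c₁ := by
      have h1 := hpu t ht
      have h2 := hexp t ht
      have h3 : Real.exp (-(ε * (d / s))) ≤ 1 := by
        rw [Real.exp_le_one_iff]
        have h4 : 0 ≤ ε * (d / s) := by positivity
        linarith only [h4]
      calc p t ≤ C₁ / V s *
            Real.exp (-(c₁ * sSup {x : ℝ | ∃ r : ℝ, 0 < r ∧ x = c₂ * d / r - t / ψc r})) := h1
        _ ≤ C₁ / V s * (Real.exp c₁ * Real.exp (-(ε * (d / s)))) :=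
            mul_le_mul_of_nonneg_left h2 (by positivity)
        _ ≤ C₁ / V s * (Real.exp c₁ * 1) := by
            apply mul_le_mul_of_nonneg_left _ (by positivity)
            exact mul_le_mul_of_nonneg_left h3 (Real.exp_pos _).le
        _ = C₁ * (V s)⁻¹ * Real.exp c₁ := by rw [mul_one, div_eq_mul_inv]
    have hy2 : (t / (Cc * T₁)) ^ θ ≤ (s / d) ^ α₁ := by
      have hypos : (0:ℝ) < s / d := by positivity
      have h1 := hψcD₂ d s hd hds
      rw [hst, ← hT₁def] at h1
      have h2 : t / (Cc * T₁) ≤ (s / d) ^ β₂c := by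
        rw [div_le_iff₀ (by positivity)]
        linarith only [h1]
      have h3 := Real.rpow_le_rpow (by positivity) h2 (inv_nonneg.2 hβ₂c.le)
      rw [rpow_rpow_inv' hypos.le hβ₂c.ne'] at h3
      have h4 := Real.rpow_le_rpow (by positivity) h3 hα₁.le
      rwa [← Real.rpow_mul (by positivity), ← hθdef] at h4
    have hVlow : c * (t / (Cc * T₁)) ^ θ * V d ≤ V s := by
      have h1 := hVD₁ d s hd hds
      have h2 : c * (t / (Cc * T₁)) ^ θ * V d ≤ c * (s / d) ^ α₁ * V d :=
        mul_le_mul_of_nonneg_right (mul_le_mul_of_nonneg_left hy2 hc.le) hVd.le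
      linarith only [h1, h2]
    have hrp1 : (0:ℝ) < (t / (Cc * T₁)) ^ θ := Real.rpow_pos_of_pos (by positivity) _
    have hVinv : (V s)⁻¹ ≤ (c * (t / (Cc * T₁)) ^ θ * V d)⁻¹ :=
      inv_anti₀ (by positivity) hVlow
    have hψjinv : (ψj s)⁻¹ ≤ (ψj d)⁻¹ :=
      inv_anti₀ hψjd (hψjmono d s hd.le hds)
    have hEt : t ^ (-θ - 1) = (t ^ θ)⁻¹ * t⁻¹ := by
      rw [show -θ - 1 = -θ + -1 by ring, Real.rpow_add ht, Real.rpow_neg ht.le,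
        Real.rpow_neg_one]
    have htp : (0:ℝ) < t ^ θ := Real.rpow_pos_of_pos ht _
    have hT₁p : (0:ℝ) < T₁ ^ θ := Real.rpow_pos_of_pos hT₁ _
    have hCcp : (0:ℝ) < Cc ^ θ := Real.rpow_pos_of_pos hCc _
    calc F t = p t / (t * ψj s) := rfl
      _ ≤ (C₁ * (V s)⁻¹ * Real.exp c₁) / (t * ψj s) := by
          have hden : 0 < t * ψj s := by positivity
          exact (div_le_div_iff_of_pos_right hden).2 hp1
      _ = C₁ * Real.exp c₁ * ((V s)⁻¹ * (ψj s)⁻¹) * t⁻¹ := by field_simp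
      _ ≤ C₁ * Real.exp c₁ * ((c * (t / (Cc * T₁)) ^ θ * V d)⁻¹ * (ψj d)⁻¹) * t⁻¹ := by
          gcongr
      _ = Kt * (V d * ψj d)⁻¹ * T₁ ^ θ * t ^ (-θ - 1) := by
          rw [hKtdef, hEt, Real.div_rpow ht.le (by positivity),
            Real.mul_rpow hCc.le hT₁.le]
          field_simp
  -- integrability of the dominating tail function
  have hbtail : IntegrableOn
      (fun t : ℝ => Kt * (V d * ψj d)⁻¹ * T₁ ^ θ * t ^ (-θ - 1)) (Ioi T₁) volume :=
    (integrableOn_Ioi_rpow_of_lt (by linarith) hT₁).const_mul _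
  have htail_int : IntegrableOn F (Ioi T₁) volume := by
    refine hbtail.mono'
      (hFmeas.mono_measure (Measure.restrict_mono (Ioi_subset_Ioi hT₁.le) le_rfl)) ?_
    refine (ae_restrict_iff' measurableSet_Ioi).2 (ae_of_all _ fun t ht => ?_)
    have ht0 : 0 < t := hT₁.trans ht
    rw [Real.norm_eq_abs, abs_of_nonneg (hF0 t ht0)]
    exact hF_tail t ht
  have hFconst : ∀ t ∈ Ioc 0 T₁, F t ≤ Ks * (V d * ψj d)⁻¹ * (1 / T₁) := by
    intro t ht
    calc F t ≤ Ks * (V d * ψj d)⁻¹ * (t / T₁ ^ 2) := hF_small t ht.1 ht.2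
      _ ≤ Ks * (V d * ψj d)⁻¹ * (1 / T₁) := by
          apply mul_le_mul_of_nonneg_left _ (by positivity)
          rw [div_le_div_iff₀ (by positivity) hT₁]
          linarith only [mul_le_mul_of_nonneg_right ht.2 hT₁.le]
  have hbsmall : IntegrableOn
      (fun _ : ℝ => Ks * (V d * ψj d)⁻¹ * (1 / T₁)) (Ioc (0:ℝ) T₁) volume :=
    integrableOn_const measure_Ioc_lt_top.ne
  have hsmall_int : IntegrableOn F (Ioc 0 T₁) volume := by
    refine hbsmall.mono'
      (hFmeas.mono_measure (Measure.restrict_mono Ioc_subset_Ioi_self le_rfl)) ?_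
    refine (ae_restrict_iff' measurableSet_Ioc).2 (ae_of_all _ fun t ht => ?_)
    rw [Real.norm_eq_abs, abs_of_nonneg (hF0 t ht.1)]
    exact hFconst t ht
  have hIoi : Ioc (0:ℝ) T₁ ∪ Ioi T₁ = Ioi (0:ℝ) := Ioc_union_Ioi_eq_Ioi hT₁.le
  have hint : IntegrableOn F (Ioi (0:ℝ)) volume := by
    rw [← hIoi]; exact hsmall_int.union htail_int
  -- upper bound
  have hIsplit : (∫ t in Ioi (0:ℝ), F t) = (∫ t in Ioc (0:ℝ) T₁, F t) + ∫ t in Ioi T₁, F t := by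
    rw [← hIoi, setIntegral_union (Ioc_disjoint_Ioi le_rfl) measurableSet_Ioi
      hsmall_int htail_int]
  have hIsmall : (∫ t in Ioc (0:ℝ) T₁, F t) ≤ Ks * (V d * ψj d)⁻¹ := by
    calc (∫ t in Ioc (0:ℝ) T₁, F t)
        ≤ ∫ _ in Ioc (0:ℝ) T₁, Ks * (V d * ψj d)⁻¹ * (1 / T₁) :=
          setIntegral_mono_on hsmall_int hbsmall measurableSet_Ioc hFconst
      _ = Ks * (V d * ψj d)⁻¹ := by
          rw [setIntegral_const, Real.volume_real_Ioc, smul_eq_mul, sub_zero,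
            max_eq_left hT₁.le]
          field_simp
  have hItail : (∫ t in Ioi T₁, F t) ≤ Kt * θ⁻¹ * (V d * ψj d)⁻¹ := by
    have hA : (∫ t in Ioi T₁, Kt * (V d * ψj d)⁻¹ * T₁ ^ θ * t ^ (-θ - 1))
        = Kt * θ⁻¹ * (V d * ψj d)⁻¹ := by
      rw [MeasureTheory.integral_const_mul, integral_Ioi_rpow_of_lt (by linarith) hT₁,
        show -θ - 1 + 1 = -θ by ring, Real.rpow_neg hT₁.le]
      have hT₁p : (0:ℝ) < T₁ ^ θ := Real.rpow_pos_of_pos hT₁ _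
      field_simp
    calc (∫ t in Ioi T₁, F t)
        ≤ ∫ t in Ioi T₁, Kt * (V d * ψj d)⁻¹ * T₁ ^ θ * t ^ (-θ - 1) :=
          setIntegral_mono_on htail_int hbtail measurableSet_Ioi (fun t ht => hF_tail t ht)
      _ = Kt * θ⁻¹ * (V d * ψj d)⁻¹ := hA
  have hup : (∫ t in Ioi (0:ℝ), F t) ≤ K * (1 / (V d * ψj d)) := by
    rw [one_div, hIsplit]
    have h1 : Ks * (V d * ψj d)⁻¹ + Kt * θ⁻¹ * (V d * ψj d)⁻¹ = KU * (V d * ψj d)⁻¹ := by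
      rw [hKUdef]; ring
    have h2 : KU * (V d * ψj d)⁻¹ ≤ K * (V d * ψj d)⁻¹ :=
      mul_le_mul_of_nonneg_right hKU (inv_nonneg.2 hVψjd.le)
    linarith only [hIsmall, hItail, h1, h2]
  -- lower bound
  set T₀ : ℝ := ψc (d / δ) with hT₀def
  have hdδ : 0 < d / δ := by positivity
  have hT₀ : 0 < T₀ := hψcpos _ hdδ
  have hJsub : Ioc T₀ (2 * T₀) ⊆ Ioi (0:ℝ) := fun t ht => mem_Ioi.2 (hT₀.trans ht.1)
  have hs₂le : ψcinv (2 * T₀) ≤ (2 * Cc) ^ β₁c⁻¹ * (d / δ) := by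
    set s₂ := ψcinv (2 * T₀) with hs₂def
    have h2T : (0:ℝ) < 2 * T₀ := by positivity
    have hs₂pos : 0 < s₂ := hinvpos _ h2T
    have hρs : d / δ ≤ s₂ := by
      have := hinvmono T₀ (2 * T₀) hT₀.le (by linarith)
      rwa [hT₀def, hinv₁ _ hdδ.le] at this
    have hst2 : ψc s₂ = 2 * T₀ := hinv₂ _ h2T.le
    have h1 := hψcD₁ (d / δ) s₂ hdδ hρs
    rw [hst2, ← hT₀def] at h1
    have h3 : Cc⁻¹ * (s₂ / (d / δ)) ^ β₁c ≤ 2 := by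
      have := (mul_le_mul_iff_left₀ hT₀).1 h1
      linarith only [this]
    have h2 : (s₂ / (d / δ)) ^ β₁c ≤ 2 * Cc := by
      calc (s₂ / (d / δ)) ^ β₁c = Cc * (Cc⁻¹ * (s₂ / (d / δ)) ^ β₁c) := by
            field_simp
        _ ≤ Cc * 2 := mul_le_mul_of_nonneg_left h3 hCc.le
        _ = 2 * Cc := by ring
    have h4 := Real.rpow_le_rpow (by positivity) h2 (inv_nonneg.2 hβ₁cpos.le)
    rw [rpow_rpow_inv' (by positivity) hβ₁cpos.ne'] at h4
    rw [div_le_iff₀ hdδ] at h4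
    linarith only [h4]
  have hJbound : ∀ t ∈ Ioc T₀ (2 * T₀), c₃ / (M * (V d * ψj d) * (2 * T₀)) ≤ F t := by
    intro t ht
    have ht0 : 0 < t := hT₀.trans ht.1
    have hspos : 0 < ψcinv t := hinvpos t ht0
    set s := ψcinv t with hs
    have hVs : 0 < V s := hVpos s hspos
    have hψjs : 0 < ψj s := hψjpos s hspos
    have hρs : d / δ ≤ s := by
      have := hinvmono T₀ t hT₀.le ht.1.le
      rwa [hT₀def, hinv₁ _ hdδ.le] at this
    have hslam : s ≤ lam * d := by
      have h1 : s ≤ ψcinv (2 * T₀) := hinvmono t (2 * T₀) ht0.le ht.2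
      have h2 := h1.trans hs₂le
      rw [hlamdef]
      calc s ≤ (2 * Cc) ^ β₁c⁻¹ * (d / δ) := h2
        _ = (2 * Cc) ^ β₁c⁻¹ / δ * d := by ring
    have hdles : d ≤ δ * s := by
      rw [div_le_iff₀ hδ] at hρs
      linarith only [hρs]
    have hplow := hpl t ht0 hdles
    have hVψj : V s * ψj s ≤ M * (V d * ψj d) := by
      rcases le_or_gt s d with hcase | hcase
      · have h1 := hVD₁ s d hspos hcase
        have hge1 : (1:ℝ) ≤ (d / s) ^ α₁ :=
          Real.one_le_rpow ((one_le_div hspos).2 hcase) hα₁.le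
        have hVle : V s ≤ V d / c := by
          rw [le_div_iff₀ hc]
          calc V s * c = c * 1 * V s := by ring
            _ ≤ c * (d / s) ^ α₁ * V s :=
                mul_le_mul_of_nonneg_right (mul_le_mul_of_nonneg_left hge1 hc.le) hVs.le
            _ ≤ V d := h1
        have hψjle : ψj s ≤ ψj d := hψjmono s d hspos.le hcase
        have hMle : 1 / c ≤ M := le_max_left _ _
        calc V s * ψj s ≤ (V d / c) * ψj d := mul_le_mul hVle hψjle hψjs.le (by positivity)
          _ = (1 / c) * (V d * ψj d) := by ring
          _ ≤ M * (V d * ψj d) := mul_le_mul_of_nonneg_right hMle hVψjd.le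
      · have hsd := hcase.le
        have hyl : s / d ≤ lam := (div_le_iff₀ hd).2 (by linarith only [hslam])
        have h1 := hVD₂ d s hd hsd
        have h2 := hψjD₂ d s hd hsd
        have hsd0 : (0:ℝ) ≤ s / d := by positivity
        have hr1 : (s / d) ^ α₂ ≤ lam ^ α₂ := Real.rpow_le_rpow hsd0 hyl hα₂.le
        have hr2 : (s / d) ^ β₂j ≤ lam ^ β₂j := Real.rpow_le_rpow hsd0 hyl hβ₂j.le
        have hMle : C * Cj * lam ^ α₂ * lam ^ β₂j ≤ M := le_max_right _ _
        calc V s * ψj s ≤ (C * (s / d) ^ α₂ * V d) * (Cj * (s / d) ^ β₂j * ψj d) :=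
              mul_le_mul h1 h2 hψjs.le (by positivity)
          _ ≤ (C * lam ^ α₂ * V d) * (Cj * lam ^ β₂j * ψj d) := by gcongr
          _ = (C * Cj * lam ^ α₂ * lam ^ β₂j) * (V d * ψj d) := by ring
          _ ≤ M * (V d * ψj d) := mul_le_mul_of_nonneg_right hMle hVψjd.le
    have hden : 0 < V s * ψj s * t := by positivity
    have hFt : c₃ / (V s * ψj s * t) ≤ F t := by
      have hden2 : 0 < t * ψj s := by positivity
      have h1 : (c₃ / V s) / (t * ψj s) ≤ F t := (div_le_div_iff_of_pos_right hden2).2 hplow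
      have h2 : c₃ / (V s * ψj s * t) = (c₃ / V s) / (t * ψj s) := by
        rw [div_div]
        ring_nf
      rw [h2]
      exact h1
    calc c₃ / (M * (V d * ψj d) * (2 * T₀)) ≤ c₃ / (V s * ψj s * t) := by
          apply div_le_div_of_nonneg_left hc₃.le hden
          exact mul_le_mul hVψj ht.2 ht0.le (by positivity)
      _ ≤ F t := hFt
  have hLint : IntegrableOn F (Ioc T₀ (2 * T₀)) volume := hint.mono_set hJsub
  have hconst_int : IntegrableOn
      (fun _ : ℝ => c₃ / (M * (V d * ψj d) * (2 * T₀))) (Ioc T₀ (2 * T₀)) volume :=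
    integrableOn_const measure_Ioc_lt_top.ne
  have hlow1 : KL * (V d * ψj d)⁻¹ ≤ ∫ t in Ioc T₀ (2 * T₀), F t := by
    have h1 : (∫ _ in Ioc T₀ (2 * T₀), c₃ / (M * (V d * ψj d) * (2 * T₀)))
        ≤ ∫ t in Ioc T₀ (2 * T₀), F t :=
      setIntegral_mono_on hconst_int hLint measurableSet_Ioc hJbound
    have h2 : (∫ _ in Ioc T₀ (2 * T₀), c₃ / (M * (V d * ψj d) * (2 * T₀)))
        = KL * (V d * ψj d)⁻¹ := by
      rw [setIntegral_const, Real.volume_real_Ioc, smul_eq_mul,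
        max_eq_left (by linarith)]
      rw [hKLdef]
      field_simp
      ring
    linarith only [h1, h2]
  have hlow : K⁻¹ * (1 / (V d * ψj d)) ≤ ∫ t in Ioi (0:ℝ), F t := by
    have h1 : (∫ t in Ioc T₀ (2 * T₀), F t) ≤ ∫ t in Ioi (0:ℝ), F t := by
      refine setIntegral_mono_set hint ?_ (HasSubset.Subset.eventuallyLE hJsub)
      filter_upwards [ae_restrict_mem measurableSet_Ioi] with t ht using hF0 t ht
    have h2 : K⁻¹ * (1 / (V d * ψj d)) ≤ KL * (V d * ψj d)⁻¹ := by
      rw [one_div]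
      exact mul_le_mul_of_nonneg_right hKinv (inv_nonneg.2 hVψjd.le)
    linarith only [h1, h2, hlow1]
  exact ⟨hint, hlow, hup⟩
end
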